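/- Let s, t ≥ 2 and consider the grid graph P_s □ P_t, where V(P_s) = {u_1,…,u_s} and V(P_t) = {v_1,…,v_t}. Set W_1 = {(u_1,v_1),(u_1,v_t)}, W_2 = {(u_1,v_1),(u_s,v_1)}, W_3 = {(u_1,v_t),(u_s,v_t)}, W_4 = {(u_s,v_1),(u_s,v_t)}. Then a set W of vertices with |W| = 2 is a resolving set of P_s □ P_t if and only if W = W_i for some i ∈ {1,2,3,4}. -/

import Mathlib

open SimpleGraph

/-- A walk in the path graph realizing the natural distance between endpoints. -/
lemma pathGraph_exists_walk (n : ℕ) : ∀ (k : ℕ) (i j : Fin n), (i.1 - j.1) + (j.1 - i.1) = k →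
    ∃ w : (pathGraph n).Walk i j, w.length = k := by
  intro k
  induction k with
  | zero =>
    intro i j h
    have : i = j := Fin.ext (by omega)
    subst this
    exact ⟨.nil, rfl⟩
  | succ k ih =>
    intro i j h
    have hi := i.2; have hj := j.2
    rcases lt_or_gt_of_ne (show i.1 ≠ j.1 by omega) with hlt | hgt
    · have hadj : (pathGraph n).Adj i ⟨i.1 + 1, by omega⟩ := pathGraph_adj.2 (Or.inl rfl)
      obtain ⟨w, hw⟩ := ih ⟨i.1 + 1, by omega⟩ j (by simp; omega)
      exact ⟨.cons hadj w, by simp [hw]⟩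
    · have hadj : (pathGraph n).Adj i ⟨i.1 - 1, by omega⟩ := pathGraph_adj.2 (Or.inr (by simp; omega))
      obtain ⟨w, hw⟩ := ih ⟨i.1 - 1, by omega⟩ j (by simp; omega)
      exact ⟨.cons hadj w, by simp [hw]⟩

/-- Lower bound: any walk in the grid is at least as long as the ℓ¹-distance. -/
lemma grid_walk_lower {s t : ℕ} {x y : Fin s × Fin t}
    (w : (pathGraph s □ pathGraph t).Walk x y) :
    (x.1.1 - y.1.1) + (y.1.1 - x.1.1) + ((x.2.1 - y.2.1) + (y.2.1 - x.2.1)) ≤ w.length := by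
  induction w with
  | nil => simp
  | @cons u v w h p ih =>
    rw [Walk.length_cons]
    rcases h with ⟨h1, h2⟩ | ⟨h1, h2⟩
    · rw [pathGraph_adj] at h1
      have h2' : u.2.1 = v.2.1 := by rw [h2]
      omega
    · rw [pathGraph_adj] at h1
      have h2' : u.1.1 = v.1.1 := by rw [h2]
      omega

/-- The distance in the grid graph is the ℓ¹ (taxicab) distance. -/
lemma grid_dist {s t : ℕ} (x y : Fin s × Fin t) :
    (pathGraph s □ pathGraph t).dist x y =
      (x.1.1 - y.1.1) + (y.1.1 - x.1.1) + ((x.2.1 - y.2.1) + (y.2.1 - x.2.1)) := by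
  obtain ⟨w1, hw1⟩ := pathGraph_exists_walk s _ x.1 y.1 rfl
  obtain ⟨w2, hw2⟩ := pathGraph_exists_walk t _ x.2 y.2 rfl
  let wu : (pathGraph s □ pathGraph t).Walk x y :=
    (w1.boxProdLeft (pathGraph t) x.2).append (Walk.boxProdRight (pathGraph s) y.1 w2)
  refine le_antisymm ?_ ?_
  · have hle := dist_le wu
    have hlen : wu.length = w1.length + w2.length := by
      exact (Walk.length_append _ _).trans (congrArg₂ (· + ·) (Walk.length_map _ _) (Walk.length_map _ _))
    omega
  · obtain ⟨w, hw⟩ := Reachable.exists_walk_length_eq_dist ⟨wu⟩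
    rw [← hw]
    exact grid_walk_lower w

/-- `W` is a resolving set of `G`: every pair of distinct vertices is
distinguished by its distance to some vertex of `W`. -/
def IsResolving {V : Type*} (G : SimpleGraph V) (W : Set V) : Prop :=
  ∀ x y : V, x ≠ y → ∃ z ∈ W, G.dist x z ≠ G.dist y z

lemma resolves_helper {s t : ℕ} (a b : Fin s × Fin t)
    (h : ∀ x y : Fin s × Fin t,
      (pathGraph s □ pathGraph t).dist x a = (pathGraph s □ pathGraph t).dist y a →
      (pathGraph s □ pathGraph t).dist x b = (pathGraph s □ pathGraph t).dist y b → x = y) :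
    IsResolving (pathGraph s □ pathGraph t) ({a, b} : Set _) := by
  intro x y hxy
  by_contra hc
  push_neg at hc
  exact hxy (h x y (hc a (Set.mem_insert _ _)) (hc b (Set.mem_insert_of_mem _ rfl)))

set_option maxHeartbeats 2000000 in
/-- For `s, t ≥ 2`, a two-element set of vertices of the grid `P_s □ P_t` is a
resolving set if and only if it is one of the four pairs of corners
`W_1 = {(u_1,v_1),(u_1,v_t)}`, `W_2 = {(u_1,v_1),(u_s,v_1)}`,
`W_3 = {(u_1,v_t),(u_s,v_t)}`, `W_4 = {(u_s,v_1),(u_s,v_t)}`. -/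
theorem grid_basis_characterization (s t : ℕ) (hs : 2 ≤ s) (ht : 2 ≤ t)
    (W : Set (Fin s × Fin t)) (hcard : W.ncard = 2) :
    IsResolving (pathGraph s □ pathGraph t) W ↔
      (W = {(⟨0, by omega⟩, ⟨0, by omega⟩), (⟨0, by omega⟩, ⟨t - 1, by omega⟩)} ∨
       W = {(⟨0, by omega⟩, ⟨0, by omega⟩), (⟨s - 1, by omega⟩, ⟨0, by omega⟩)} ∨
       W = {(⟨0, by omega⟩, ⟨t - 1, by omega⟩), (⟨s - 1, by omega⟩, ⟨t - 1, by omega⟩)} ∨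
       W = {(⟨s - 1, by omega⟩, ⟨0, by omega⟩), (⟨s - 1, by omega⟩, ⟨t - 1, by omega⟩)}) := by
  constructor
  · -- forward direction
    intro R
    obtain ⟨a, b, hab, hW⟩ := Set.ncard_eq_two.mp hcard
    subst hW
    have ha1 := a.1.2; have ha2 := a.2.2; have hb1 := b.1.2; have hb2 := b.2.2
    have key : ∀ p1 q1 p2 q2 : ℕ, ∀ hp1 : p1 < s, ∀ hq1 : q1 < s, ∀ hp2 : p2 < t, ∀ hq2 : q2 < t,
        (p1 - a.1.1) + (a.1.1 - p1) + ((p2 - a.2.1) + (a.2.1 - p2))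
          = (q1 - a.1.1) + (a.1.1 - q1) + ((q2 - a.2.1) + (a.2.1 - q2)) →
        (p1 - b.1.1) + (b.1.1 - p1) + ((p2 - b.2.1) + (b.2.1 - p2))
          = (q1 - b.1.1) + (b.1.1 - q1) + ((q2 - b.2.1) + (b.2.1 - q2)) →
        p1 = q1 ∧ p2 = q2 := by
      intro p1 q1 p2 q2 hp1 hq1 hp2 hq2 e1 e2
      by_contra hc
      have hne : ((⟨p1, hp1⟩ : Fin s), (⟨p2, hp2⟩ : Fin t))
          ≠ ((⟨q1, hq1⟩ : Fin s), (⟨q2, hq2⟩ : Fin t)) := by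
        simp only [ne_eq, Prod.ext_iff, Fin.mk.injEq]
        omega
      obtain ⟨z, hz, hdz⟩ := R _ _ hne
      simp only [Set.mem_insert_iff, Set.mem_singleton_iff] at hz
      rcases hz with rfl | rfl
      · exact hdz (by rw [grid_dist, grid_dist]; simp only; omega)
      · exact hdz (by rw [grid_dist, grid_dist]; simp only; omega)
    have habn : ¬(a.1.1 = b.1.1 ∧ a.2.1 = b.2.1) :=
      fun ⟨h1, h2⟩ => hab (Prod.ext (Fin.ext h1) (Fin.ext h2))
    obtain ⟨r', hr's, hr'⟩ : ∃ r', r' < s ∧ (r' - a.1.1) + (a.1.1 - r') = 1 := by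
      rcases Nat.eq_zero_or_pos a.1.1 with h | h
      · exact ⟨1, by omega, by omega⟩
      · exact ⟨a.1.1 - 1, by omega, by omega⟩
    obtain ⟨c', hc't, hc'⟩ : ∃ c', c' < t ∧ (c' - a.2.1) + (a.2.1 - c') = 1 := by
      rcases Nat.eq_zero_or_pos a.2.1 with h | h
      · exact ⟨1, by omega, by omega⟩
      · exact ⟨a.2.1 - 1, by omega, by omega⟩
    have step1 : a.1.1 = b.1.1 ∨ a.2.1 = b.2.1 := by
      by_contra hc
      push_neg at hc
      obtain ⟨h1, h2⟩ := hc
      rcases Nat.lt_or_ge a.1.1 b.1.1 with hx | hx <;>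
        rcases Nat.lt_or_ge a.2.1 b.2.1 with hy | hy
      · obtain ⟨e1, e2⟩ := key (a.1.1 + 1) a.1.1 a.2.1 (a.2.1 + 1)
          (by omega) (by omega) (by omega) (by omega) (by omega) (by omega)
        omega
      · obtain ⟨e1, e2⟩ := key (a.1.1 + 1) a.1.1 a.2.1 (a.2.1 - 1)
          (by omega) (by omega) (by omega) (by omega) (by omega) (by omega)
        omega
      · obtain ⟨e1, e2⟩ := key (a.1.1 - 1) a.1.1 a.2.1 (a.2.1 + 1)
          (by omega) (by omega) (by omega) (by omega) (by omega) (by omega)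
        omega
      · obtain ⟨e1, e2⟩ := key (a.1.1 - 1) a.1.1 a.2.1 (a.2.1 - 1)
          (by omega) (by omega) (by omega) (by omega) (by omega) (by omega)
        omega
    have pairEq : ∀ (c d : Fin s × Fin t), (a = c ∧ b = d) ∨ (a = d ∧ b = c) →
        ({a, b} : Set (Fin s × Fin t)) = {c, d} := by
      rintro c d (⟨rfl, rfl⟩ | ⟨rfl, rfl⟩)
      · rfl
      · exact Set.pair_comm _ _
    rcases step1 with hA | hA
    · -- same column coordinate a.1 = b.1
      have hA2 : a.2.1 ≠ b.2.1 := fun h => habn ⟨hA, h⟩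
      have h0 : a.1.1 = 0 ∨ a.1.1 = s - 1 := by
        by_contra hc
        push_neg at hc
        obtain ⟨e1, e2⟩ := key (a.1.1 - 1) (a.1.1 + 1) a.2.1 a.2.1
          (by omega) (by omega) (by omega) (by omega) (by omega) (by omega)
        omega
      have hmm : (a.2.1 = 0 ∧ b.2.1 = t - 1) ∨ (a.2.1 = t - 1 ∧ b.2.1 = 0) := by
        rcases Nat.lt_or_ge a.2.1 b.2.1 with h | h
        · left
          have hz : a.2.1 = 0 := by
            by_contra hzz
            obtain ⟨e1, e2⟩ := key a.1.1 r' (a.2.1 - 1) a.2.1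
              (by omega) hr's (by omega) (by omega) (by omega) (by omega)
            omega
          have hM : b.2.1 = t - 1 := by
            by_contra hzz
            obtain ⟨e1, e2⟩ := key a.1.1 r' (b.2.1 + 1) b.2.1
              (by omega) hr's (by omega) (by omega) (by omega) (by omega)
            omega
          exact ⟨hz, hM⟩
        · right
          have h' : b.2.1 < a.2.1 := by omega
          have hz : b.2.1 = 0 := by
            by_contra hzz
            obtain ⟨e1, e2⟩ := key a.1.1 r' (b.2.1 - 1) b.2.1
              (by omega) hr's (by omega) (by omega) (by omega) (by omega)
            omega
          have hM : a.2.1 = t - 1 := by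
            by_contra hzz
            obtain ⟨e1, e2⟩ := key a.1.1 r' (a.2.1 + 1) a.2.1
              (by omega) hr's (by omega) (by omega) (by omega) (by omega)
            omega
          exact ⟨hM, hz⟩
      rcases h0 with h0 | h0
      · -- W₁
        refine Or.inl (pairEq _ _ ?_)
        rcases hmm with ⟨h1, h2⟩ | ⟨h1, h2⟩
        · exact Or.inl ⟨Prod.ext (Fin.ext (by simp only; omega)) (Fin.ext (by simp only; omega)),
            Prod.ext (Fin.ext (by simp only; omega)) (Fin.ext (by simp only; omega))⟩
        · exact Or.inr ⟨Prod.ext (Fin.ext (by simp only; omega)) (Fin.ext (by simp only; omega)),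
            Prod.ext (Fin.ext (by simp only; omega)) (Fin.ext (by simp only; omega))⟩
      · -- W₄
        refine Or.inr (Or.inr (Or.inr (pairEq _ _ ?_)))
        rcases hmm with ⟨h1, h2⟩ | ⟨h1, h2⟩
        · exact Or.inl ⟨Prod.ext (Fin.ext (by simp only; omega)) (Fin.ext (by simp only; omega)),
            Prod.ext (Fin.ext (by simp only; omega)) (Fin.ext (by simp only; omega))⟩
        · exact Or.inr ⟨Prod.ext (Fin.ext (by simp only; omega)) (Fin.ext (by simp only; omega)),
            Prod.ext (Fin.ext (by simp only; omega)) (Fin.ext (by simp only; omega))⟩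
    · -- same row coordinate a.2 = b.2
      have hA1 : a.1.1 ≠ b.1.1 := fun h => habn ⟨h, hA⟩
      have h0 : a.2.1 = 0 ∨ a.2.1 = t - 1 := by
        by_contra hc
        push_neg at hc
        obtain ⟨e1, e2⟩ := key a.1.1 a.1.1 (a.2.1 - 1) (a.2.1 + 1)
          (by omega) (by omega) (by omega) (by omega) (by omega) (by omega)
        omega
      have hmm : (a.1.1 = 0 ∧ b.1.1 = s - 1) ∨ (a.1.1 = s - 1 ∧ b.1.1 = 0) := by
        rcases Nat.lt_or_ge a.1.1 b.1.1 with h | h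
        · left
          have hz : a.1.1 = 0 := by
            by_contra hzz
            obtain ⟨e1, e2⟩ := key (a.1.1 - 1) a.1.1 a.2.1 c'
              (by omega) (by omega) (by omega) hc't (by omega) (by omega)
            omega
          have hM : b.1.1 = s - 1 := by
            by_contra hzz
            obtain ⟨e1, e2⟩ := key (b.1.1 + 1) b.1.1 a.2.1 c'
              (by omega) (by omega) (by omega) hc't (by omega) (by omega)
            omega
          exact ⟨hz, hM⟩
        · right
          have h' : b.1.1 < a.1.1 := by omega
          have hz : b.1.1 = 0 := by
            by_contra hzz
            obtain ⟨e1, e2⟩ := key (b.1.1 - 1) b.1.1 a.2.1 c'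
              (by omega) (by omega) (by omega) hc't (by omega) (by omega)
            omega
          have hM : a.1.1 = s - 1 := by
            by_contra hzz
            obtain ⟨e1, e2⟩ := key (a.1.1 + 1) a.1.1 a.2.1 c'
              (by omega) (by omega) (by omega) hc't (by omega) (by omega)
            omega
          exact ⟨hM, hz⟩
      rcases h0 with h0 | h0
      · -- W₂
        refine Or.inr (Or.inl (pairEq _ _ ?_))
        rcases hmm with ⟨h1, h2⟩ | ⟨h1, h2⟩
        · exact Or.inl ⟨Prod.ext (Fin.ext (by simp only; omega)) (Fin.ext (by simp only; omega)),
            Prod.ext (Fin.ext (by simp only; omega)) (Fin.ext (by simp only; omega))⟩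
        · exact Or.inr ⟨Prod.ext (Fin.ext (by simp only; omega)) (Fin.ext (by simp only; omega)),
            Prod.ext (Fin.ext (by simp only; omega)) (Fin.ext (by simp only; omega))⟩
      · -- W₃
        refine Or.inr (Or.inr (Or.inl (pairEq _ _ ?_)))
        rcases hmm with ⟨h1, h2⟩ | ⟨h1, h2⟩
        · exact Or.inl ⟨Prod.ext (Fin.ext (by simp only; omega)) (Fin.ext (by simp only; omega)),
            Prod.ext (Fin.ext (by simp only; omega)) (Fin.ext (by simp only; omega))⟩
        · exact Or.inr ⟨Prod.ext (Fin.ext (by simp only; omega)) (Fin.ext (by simp only; omega)),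
            Prod.ext (Fin.ext (by simp only; omega)) (Fin.ext (by simp only; omega))⟩
  · -- backward direction
    rintro (h | h | h | h) <;> rw [h] <;>
    · apply resolves_helper
      intro x y h1 h2
      rw [grid_dist, grid_dist] at h1 h2
      simp only at h1 h2
      have hx1 := x.1.2; have hx2 := x.2.2; have hy1 := y.1.2; have hy2 := y.2.2
      exact Prod.ext (Fin.ext (by omega)) (Fin.ext (by omega))
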